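/- A (not necessarily associative) Set-monad (F, ι, μ) weakly preserves binary products if and only if F(1) ≅ 1. -/

import Mathlib

open CategoryTheory

universe u

theorem monad_weakly_preserves_products_iff_connected
    (F : Type u ⥤ Type u) (ι : 𝟭 (Type u) ⟶ F) (μ : F ⋙ F ⟶ F)
    (unit1 : ∀ X : Type u, μ.app X ∘ ι.app (F.obj X) = id)
    (unit2 : ∀ X : Type u, μ.app X ∘ F.map (ι.app X) = id) :
    (∀ (A₁ A₂ : Type u) (Q : Type u) (q₁ : Q → F.obj A₁) (q₂ : Q → F.obj A₂),
      ∃ d : Q → F.obj (A₁ × A₂),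
        F.map (TypeCat.ofHom (Prod.fst : A₁ × A₂ → A₁)) ∘ d = q₁ ∧
        F.map (TypeCat.ofHom (Prod.snd : A₁ × A₂ → A₂)) ∘ d = q₂) ↔
    Nonempty (F.obj (PUnit : Type u) ≃ PUnit) := by
  constructor
  · intro h
    obtain ⟨d, hd1, hd2⟩ := h PUnit PUnit (F.obj PUnit × F.obj PUnit) Prod.fst Prod.snd
    have key : ∀ x y : F.obj (PUnit : Type u), x = y := by
      intro x y
      have h1 := congrFun hd1 (x, y)
      have h2 := congrFun hd2 (x, y)
      have hfs : (Prod.fst : PUnit × PUnit → PUnit) = Prod.snd := by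
        funext p; rfl
      simp only [Function.comp_apply] at h1 h2
      calc x = F.map (TypeCat.ofHom (Prod.fst : PUnit × PUnit → PUnit)) (d (x, y)) := h1.symm
        _ = F.map (TypeCat.ofHom (Prod.snd : PUnit × PUnit → PUnit)) (d (x, y)) := by rw [hfs]
        _ = y := h2
    haveI : Subsingleton (F.obj (PUnit : Type u)) := ⟨key⟩
    haveI : Unique (F.obj (PUnit : Type u)) :=
      uniqueOfSubsingleton (ι.app PUnit PUnit.unit)
    exact ⟨Equiv.equivPUnit _⟩
  · rintro ⟨e⟩ A₁ A₂ Q q₁ q₂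
    -- F(1) is a singleton
    have uniq : ∀ z : F.obj (PUnit : Type u), z = ι.app PUnit PUnit.unit := by
      intro z
      exact e.injective (Subsingleton.elim _ _)
    -- mapping a constant function gives the unit
    have constLem : ∀ (B C : Type u) (c : C) (v : F.obj B),
        F.map (TypeCat.ofHom (fun _ : B => c)) v = ι.app C c := by
      intro B C c v
      have hcomp : TypeCat.ofHom (fun _ : B => c) =
          (TypeCat.ofHom (fun _ : B => PUnit.unit) ≫ TypeCat.ofHom (fun _ : PUnit => c) : B ⟶ C) := rfl
      rw [hcomp, F.map_comp]
      have hu : F.map (TypeCat.ofHom (fun _ : B => PUnit.unit)) v = ι.app PUnit PUnit.unit :=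
        uniq _
      show F.map (TypeCat.ofHom (fun _ : (PUnit : Type u) => c)) (F.map (TypeCat.ofHom (fun _ : B => PUnit.unit)) v) = _
      rw [hu]
      have := types_congr_hom (ι.naturality (TypeCat.ofHom (fun _ : PUnit => c) : (PUnit : Type u) ⟶ C)) PUnit.unit
      simp only [Functor.id_map, types_comp_apply, TypeCat.ofHom_apply] at this
      exact this.symm
    refine ⟨fun x => μ.app (A₁ × A₂)
      (F.map (TypeCat.ofHom fun a => F.map (TypeCat.ofHom fun b => ((a, b) : A₁ × A₂)) (q₂ x)) (q₁ x)), ?_, ?_⟩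
    · funext x
      have nat := types_congr_hom (μ.naturality (TypeCat.ofHom (Prod.fst : A₁ × A₂ → A₁) : (A₁ × A₂ : Type u) ⟶ A₁))
        (F.map (TypeCat.ofHom fun a => F.map (TypeCat.ofHom fun b => ((a, b) : A₁ × A₂)) (q₂ x)) (q₁ x))
      simp only [Functor.comp_map, types_comp_apply] at nat
      show F.map (TypeCat.ofHom Prod.fst) (μ.app (A₁ × A₂) _) = q₁ x
      rw [← nat]
      have step : F.map (F.map (TypeCat.ofHom (Prod.fst : A₁ × A₂ → A₁)))
          (F.map (TypeCat.ofHom fun a => F.map (TypeCat.ofHom fun b => ((a, b) : A₁ × A₂)) (q₂ x)) (q₁ x))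
          = F.map (ι.app A₁) (q₁ x) := by
        rw [← FunctorToTypes.map_comp_apply]
        have hfun : (TypeCat.ofHom (fun a => F.map (TypeCat.ofHom fun b => ((a, b) : A₁ × A₂)) (q₂ x)) ≫
            F.map (TypeCat.ofHom (Prod.fst : A₁ × A₂ → A₁)) : A₁ ⟶ F.obj A₁) = ι.app A₁ := by
          ext a
          show F.map (TypeCat.ofHom (Prod.fst : A₁ × A₂ → A₁)) (F.map (TypeCat.ofHom fun b => ((a, b) : A₁ × A₂)) (q₂ x))
            = ι.app A₁ a
          rw [← FunctorToTypes.map_comp_apply]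
          exact constLem A₂ A₁ a (q₂ x)
        rw [hfun]
      rw [step]
      exact congrFun (unit2 A₁) (q₁ x)
    · funext x
      have nat := types_congr_hom (μ.naturality (TypeCat.ofHom (Prod.snd : A₁ × A₂ → A₂) : (A₁ × A₂ : Type u) ⟶ A₂))
        (F.map (TypeCat.ofHom fun a => F.map (TypeCat.ofHom fun b => ((a, b) : A₁ × A₂)) (q₂ x)) (q₁ x))
      simp only [Functor.comp_map, types_comp_apply] at nat
      show F.map (TypeCat.ofHom Prod.snd) (μ.app (A₁ × A₂) _) = q₂ x
      rw [← nat]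
      have step : F.map (F.map (TypeCat.ofHom (Prod.snd : A₁ × A₂ → A₂)))
          (F.map (TypeCat.ofHom fun a => F.map (TypeCat.ofHom fun b => ((a, b) : A₁ × A₂)) (q₂ x)) (q₁ x))
          = ι.app (F.obj A₂) (q₂ x) := by
        rw [← FunctorToTypes.map_comp_apply]
        have : (TypeCat.ofHom (fun a => F.map (TypeCat.ofHom fun b => ((a, b) : A₁ × A₂)) (q₂ x)) ≫
            F.map (TypeCat.ofHom (Prod.snd : A₁ × A₂ → A₂)) : A₁ ⟶ F.obj A₂) = TypeCat.ofHom fun _ : A₁ => q₂ x := by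
          ext a
          show F.map (TypeCat.ofHom (Prod.snd : A₁ × A₂ → A₂)) (F.map (TypeCat.ofHom fun b => ((a, b) : A₁ × A₂)) (q₂ x))
            = q₂ x
          rw [← FunctorToTypes.map_comp_apply]
          have hid : (TypeCat.ofHom (fun b => ((a, b) : A₁ × A₂)) ≫ TypeCat.ofHom (Prod.snd : A₁ × A₂ → A₂) : A₂ ⟶ A₂)
              = 𝟙 A₂ := rfl
          rw [hid, FunctorToTypes.map_id_apply]
        rw [this]
        exact constLem A₁ (F.obj A₂) (q₂ x) (q₁ x)
      rw [step]
      exact congrFun (unit1 A₂) (q₂ x)
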